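/- Let G₁ and G₂ be disjoint finite simple graphs with vertices s₁ ∈ G₁ and s₂ ∈ G₂, and let G₁ ⊔ G₂ denote their disjoint union. Then the Grundy value of Two-Token Undirected Geography on G₁ ⊔ G₂ with tokens on s₁ and s₂ equals g(G₁,s₁) XOR g(G₂,s₂), where XOR is bitwise exclusive-or of natural numbers. -/

import Mathlib

noncomputable def mex (s : Finset ℕ) : ℕ := sInf {n : ℕ | n ∉ s}

noncomputable def geo {V : Type} [DecidableEq V] (G : SimpleGraph V) [DecidableRel G.Adj]
    (A : Finset V) (s : V) : ℕ :=
  if h : s ∈ A then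
    mex (((A.erase s).filter (fun v => G.Adj s v)).image (fun v => geo G (A.erase s) v))
  else 0
termination_by A.card
decreasing_by
  simp_wf
  exact Finset.card_erase_lt_of_mem h

/-- The disjoint union `G ⊔ H` of two simple graphs. -/
def sumGraph {V W : Type} (G : SimpleGraph V) (H : SimpleGraph W) :
    SimpleGraph (V ⊕ W) where
  Adj x y :=
    match x, y with
    | Sum.inl a, Sum.inl b => G.Adj a b
    | Sum.inr a, Sum.inr b => H.Adj a b
    | _, _ => False
  symm := by
    constructor
    intro x y h
    match x, y with
    | Sum.inl a, Sum.inl b => exact G.symm.symm _ _ h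
    | Sum.inr a, Sum.inr b => exact H.symm.symm _ _ h
  loopless := by
    constructor
    intro x h
    match x with
    | Sum.inl a => exact G.loopless.irrefl a h
    | Sum.inr a => exact H.loopless.irrefl a h

instance {V W : Type} (G : SimpleGraph V) [DecidableRel G.Adj]
    (H : SimpleGraph W) [DecidableRel H.Adj] : DecidableRel (sumGraph G H).Adj :=
  fun x y =>
    match x, y with
    | Sum.inl a, Sum.inl b => inferInstanceAs (Decidable (G.Adj a b))
    | Sum.inr a, Sum.inr b => inferInstanceAs (Decidable (H.Adj a b))
    | Sum.inl _, Sum.inr _ => inferInstanceAs (Decidable False)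
    | Sum.inr _, Sum.inl _ => inferInstanceAs (Decidable False)

/-- The Grundy value of Two-Token Undirected Geography on the graph `G`: `A` is the set
of remaining vertices and the two tokens are on `u₁` and `u₂`; a move picks a token, say
on `u`, and a neighbor `w` of `u` in `A` not occupied by the other token, moves that
token to `w` and deletes `u`.  Terminal positions have value `0`. -/
noncomputable def geo2 {V : Type} [DecidableEq V] (G : SimpleGraph V)
    [DecidableRel G.Adj] (A : Finset V) (u₁ u₂ : V) : ℕ :=
  if h : u₁ ∈ A ∧ u₂ ∈ A then
    mex ((((A.erase u₁).filter (fun w => G.Adj u₁ w ∧ w ≠ u₂)).image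
          (fun w => geo2 G (A.erase u₁) w u₂)) ∪
         (((A.erase u₂).filter (fun w => G.Adj u₂ w ∧ w ≠ u₁)).image
          (fun w => geo2 G (A.erase u₂) w u₁)))
  else 0
termination_by A.card
decreasing_by
  · exact Finset.card_erase_lt_of_mem h.1
  · exact Finset.card_erase_lt_of_mem h.2

lemma mex_notMem (s : Finset ℕ) : mex s ∉ s := by
  have h : {n : ℕ | n ∉ s}.Nonempty := (s.finite_toSet.infinite_compl).nonempty
  exact Nat.sInf_mem h

lemma mem_of_lt_mex {s : Finset ℕ} {n : ℕ} (h : n < mex s) : n ∈ s := by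
  by_contra hn
  exact absurd (Nat.sInf_le hn) (not_le.2 h)

lemma mex_eq {s : Finset ℕ} {n : ℕ} (h1 : n ∉ s) (h2 : ∀ m < n, m ∈ s) : mex s = n := by
  refine le_antisymm (Nat.sInf_le h1) ?_
  by_contra h
  push_neg at h
  exact absurd (h2 _ h) (mex_notMem s)

lemma mex_xor (S T : Finset ℕ) :
    mex ((S.image fun a => a ^^^ mex T) ∪ (T.image fun b => mex S ^^^ b)) =
      mex S ^^^ mex T := by
  apply mex_eq
  · intro hmem
    rw [Finset.mem_union] at hmem
    rcases hmem with h | h <;> rw [Finset.mem_image] at h <;> obtain ⟨a, ha, hea⟩ := h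
    · have : a = mex S := by
        have := congrArg (fun t => t ^^^ mex T) hea
        simpa [xor_cancel_right] using this
      exact mex_notMem S (this ▸ ha)
    · have : a = mex T := by
        have := congrArg (fun t => mex S ^^^ t) hea
        simpa [xor_cancel_left] using this
      exact mex_notMem T (this ▸ ha)
  · intro m hm
    rcases Nat.lt_xor_cases hm with h | h
    · exact Finset.mem_union_left _ (Finset.mem_image.2
        ⟨m ^^^ mex T, mem_of_lt_mex h, by rw [xor_cancel_right]⟩)
    · exact Finset.mem_union_right _ (Finset.mem_image.2
        ⟨m ^^^ mex S, mem_of_lt_mex h, by rw [Nat.xor_comm m, xor_cancel_left]⟩)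

lemma geo2_comm {V : Type} [DecidableEq V] (G : SimpleGraph V) [DecidableRel G.Adj]
    (A : Finset V) (u v : V) : geo2 G A u v = geo2 G A v u := by
  by_cases h : u ∈ A ∧ v ∈ A
  · rw [geo2, geo2, dif_pos h, dif_pos (and_comm.mp h), Finset.union_comm]
  · rw [geo2, geo2, dif_neg h, dif_neg fun hc => h (and_comm.mp hc)]

lemma erase_disjSum_inl {V W : Type} [DecidableEq V] [DecidableEq W]
    (A : Finset V) (B : Finset W) (a : V) :
    (A.disjSum B).erase (Sum.inl a) = (A.erase a).disjSum B := by
  ext x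
  cases x <;> simp [Finset.mem_erase, and_comm]

lemma erase_disjSum_inr {V W : Type} [DecidableEq V] [DecidableEq W]
    (A : Finset V) (B : Finset W) (b : W) :
    (A.disjSum B).erase (Sum.inr b) = A.disjSum (B.erase b) := by
  ext x
  cases x <;> simp [Finset.mem_erase, and_comm]

lemma key_lemma {V W : Type} [DecidableEq V] [DecidableEq W]
    (G₁ : SimpleGraph V) [DecidableRel G₁.Adj] (G₂ : SimpleGraph W) [DecidableRel G₂.Adj] :
    ∀ (n : ℕ) (A : Finset V) (B : Finset W), A.card + B.card = n →
      ∀ s₁ s₂, s₁ ∈ A → s₂ ∈ B →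
      geo2 (sumGraph G₁ G₂) (A.disjSum B) (Sum.inl s₁) (Sum.inr s₂) =
        geo G₁ A s₁ ^^^ geo G₂ B s₂ := by
  intro n
  induction n using Nat.strong_induction_on with
  | _ n IH =>
  intro A B hn s₁ s₂ h₁ h₂
  have hx : geo G₁ A s₁ = mex (((A.erase s₁).filter fun v => G₁.Adj s₁ v).image
      fun v => geo G₁ (A.erase s₁) v) := by rw [geo, dif_pos h₁]
  have hy : geo G₂ B s₂ = mex (((B.erase s₂).filter fun v => G₂.Adj s₂ v).image
      fun v => geo G₂ (B.erase s₂) v) := by rw [geo, dif_pos h₂]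
  rw [geo2, dif_pos ⟨Finset.inl_mem_disjSum.2 h₁, Finset.inr_mem_disjSum.2 h₂⟩]
  rw [erase_disjSum_inl, erase_disjSum_inr]
  have im1 : (Finset.image
        (fun w => geo2 (sumGraph G₁ G₂) ((A.erase s₁).disjSum B) w (Sum.inr s₂))
        (((A.erase s₁).disjSum B).filter
          (fun w => (sumGraph G₁ G₂).Adj (Sum.inl s₁) w ∧ w ≠ Sum.inr s₂)))
      = (((A.erase s₁).filter fun v => G₁.Adj s₁ v).image
          fun v => geo G₁ (A.erase s₁) v).image (fun t => t ^^^ geo G₂ B s₂) := by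
    rw [Finset.image_image]
    ext t
    simp only [Finset.mem_image, Finset.mem_filter, Finset.mem_disjSum, Function.comp]
    constructor
    · rintro ⟨w, ⟨hw, hadj, hne⟩, rfl⟩
      obtain ⟨v, hv, rfl⟩ | ⟨b, hb, rfl⟩ := hw
      · refine ⟨v, ⟨hv, hadj⟩, ?_⟩
        have hc := Finset.card_erase_lt_of_mem h₁
        exact (IH _ (by omega) (A.erase s₁) B rfl v s₂ hv h₂).symm
      · exact absurd hadj (by simp [sumGraph])
    · rintro ⟨v, ⟨hv, hadj⟩, rfl⟩
      refine ⟨Sum.inl v, ⟨Or.inl ⟨v, hv, rfl⟩, hadj, by simp⟩, ?_⟩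
      have hc := Finset.card_erase_lt_of_mem h₁
      exact IH _ (by omega) (A.erase s₁) B rfl v s₂ hv h₂
  have im2 : (Finset.image
        (fun w => geo2 (sumGraph G₁ G₂) (A.disjSum (B.erase s₂)) w (Sum.inl s₁))
        ((A.disjSum (B.erase s₂)).filter
          (fun w => (sumGraph G₁ G₂).Adj (Sum.inr s₂) w ∧ w ≠ Sum.inl s₁)))
      = (((B.erase s₂).filter fun v => G₂.Adj s₂ v).image
          fun v => geo G₂ (B.erase s₂) v).image (fun t => geo G₁ A s₁ ^^^ t) := by
    rw [Finset.image_image]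
    ext t
    simp only [Finset.mem_image, Finset.mem_filter, Finset.mem_disjSum, Function.comp]
    constructor
    · rintro ⟨w, ⟨hw, hadj, hne⟩, rfl⟩
      obtain ⟨a, ha, rfl⟩ | ⟨v, hv, rfl⟩ := hw
      · exact absurd hadj (by simp [sumGraph])
      · refine ⟨v, ⟨hv, hadj⟩, ?_⟩
        rw [geo2_comm]
        have hc := Finset.card_erase_lt_of_mem h₂
        exact (IH _ (by omega) A (B.erase s₂) rfl s₁ v h₁ hv).symm
    · rintro ⟨v, ⟨hv, hadj⟩, rfl⟩
      refine ⟨Sum.inr v, ⟨Or.inr ⟨v, hv, rfl⟩, hadj, by simp⟩, ?_⟩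
      rw [geo2_comm]
      have hc := Finset.card_erase_lt_of_mem h₂
      exact IH _ (by omega) A (B.erase s₂) rfl s₁ v h₁ hv
  rw [im1, im2, hx, hy]
  exact mex_xor _ _

/-- for disjoint graphs `G₁`, `G₂` with `s₁ ∈ G₁`, `s₂ ∈ G₂`, the Grundy
value of Two-Token Undirected Geography on `G₁ ⊔ G₂` with tokens on `s₁` and `s₂` equals
`g(G₁,s₁) XOR g(G₂,s₂)`. -/
theorem stmt11 {V W : Type} [Fintype V] [DecidableEq V] [Fintype W] [DecidableEq W]
    (G₁ : SimpleGraph V) [DecidableRel G₁.Adj]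
    (G₂ : SimpleGraph W) [DecidableRel G₂.Adj] (s₁ : V) (s₂ : W) :
    geo2 (sumGraph G₁ G₂) Finset.univ (Sum.inl s₁) (Sum.inr s₂) =
      (geo G₁ Finset.univ s₁) ^^^ (geo G₂ Finset.univ s₂) := by
  have := key_lemma G₁ G₂ (Finset.univ.card + Finset.univ.card)
    (Finset.univ : Finset V) (Finset.univ : Finset W) rfl s₁ s₂
    (Finset.mem_univ s₁) (Finset.mem_univ s₂)
  rwa [Finset.univ_disjSum_univ] at this
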